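/- For every i ≥ 1, the matrix product B_i := M_1 · M_2 ⋯ M_i ∈ Mat_r(F) is upper triangular with the following entries: B_i[ℓ,ℓ] = 1/𝕃_i^{d_ℓ} for 1 ≤ ℓ ≤ r; B_i[ℓ,j] = Σ_{0 ≤ i_ℓ < i_{ℓ+1} < ⋯ < i_{j−1} < i} (Q_ℓ^{(i_ℓ)} · Q_{ℓ+1}^{(i_{ℓ+1})} ⋯ Q_{j−1}^{(i_{j−1})}) / (𝕃_{i_ℓ}^{s_ℓ} · 𝕃_{i_{ℓ+1}}^{s_{ℓ+1}} ⋯ 𝕃_{i_{j−1}}^{s_{j−1}} · 𝕃_i^{d_j}) for 1 ≤ ℓ < j ≤ r; and B_i[ℓ,j] = 0 for ℓ > j. (This is the computation of the products Θ'^{*(1)} ⋯ Θ'^{*(i)} giving the coefficients of the logarithm series of the t-module attached to the star dual t-motive.) -/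

import Mathlib

open scoped BigOperators Classical

/-- The rational function field `F(θ,t)`, realized as the fraction field of
`F[θ][t] =` `Polynomial (Polynomial F)` (inner variable `θ`, outer variable `t`). -/
noncomputable abbrev Kf (F : Type*) [Field F] : Type _ :=
  FractionRing (Polynomial (Polynomial F))

/-- The element `θ` of `F(θ,t)`. -/
noncomputable def θK (F : Type*) [Field F] : Kf F :=
  algebraMap (Polynomial (Polynomial F)) (Kf F) (Polynomial.C Polynomial.X)

/-- The element `t` of `F(θ,t)`. -/
noncomputable def tK (F : Type*) [Field F] : Kf F :=
  algebraMap (Polynomial (Polynomial F)) (Kf F) Polynomial.X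

/-- Frobenius twisting `g ↦ g^{(i)}`: the `𝔽_q[t]`-algebra endomorphism of
`𝔽_q[θ][t]` sending `θ` to `θ^{q^i}` (here `q` is a parameter). -/
noncomputable def twist (F : Type*) [Field F] (q i : ℕ) :
    Polynomial (Polynomial F) →+* Polynomial (Polynomial F) :=
  Polynomial.mapRingHom (Polynomial.eval₂RingHom Polynomial.C (Polynomial.X ^ q ^ i))

/-- `LL F q i = 𝕃_i = (t−θ^q)(t−θ^{q²})⋯(t−θ^{q^i})`, with `𝕃_0 = 1`. -/
noncomputable def LL (F : Type*) [Field F] (q i : ℕ) : Kf F :=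
  ∏ k ∈ Finset.Icc 1 i, (tK F - θK F ^ q ^ k)

/-- `dsum s r j = d_j = s_j + s_{j+1} + ⋯ + s_r`. -/
def dsum (s : ℕ → ℕ) (r j : ℕ) : ℕ :=
  ∑ m ∈ Finset.Icc j r, s m

/-- The upper bidiagonal matrix `M_k ∈ Mat_r(F(θ,t))` with diagonal entries
`(M_k)[j,j] = 1/(t−θ^{q^k})^{d_j}`, superdiagonal entries
`(M_k)[j,j+1] = Q_j^{(k−1)}/(t−θ^{q^k})^{d_{j+1}}`, and all other entries `0`.
Rows/columns are indexed by `Fin r`, index `a` corresponding to `1`-based index `a+1`. -/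
noncomputable def Mmat (F : Type*) [Field F] (q r : ℕ) (s : ℕ → ℕ)
    (Q : ℕ → Polynomial (Polynomial F)) (k : ℕ) : Matrix (Fin r) (Fin r) (Kf F) :=
  Matrix.of fun a b =>
    if (a : ℕ) = b then ((tK F - θK F ^ q ^ k) ^ dsum s r ((a : ℕ) + 1))⁻¹
    else if (b : ℕ) = (a : ℕ) + 1 then
      algebraMap (Polynomial (Polynomial F)) (Kf F) (twist F q (k - 1) (Q ((a : ℕ) + 1))) *
        ((tK F - θK F ^ q ^ k) ^ dsum s r ((b : ℕ) + 1))⁻¹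
    else 0

/-- The claimed value of the product `M_1 ⋯ M_i`. -/
noncomputable def Bmat (F : Type*) [Field F] (q r : ℕ) (s : ℕ → ℕ)
    (Q : ℕ → Polynomial (Polynomial F)) (i : ℕ) : Matrix (Fin r) (Fin r) (Kf F) :=
  Matrix.of fun a b : Fin r =>
    if (a : ℕ) = b then (LL F q i ^ dsum s r ((a : ℕ) + 1))⁻¹
    else if (a : ℕ) < b then
      ∑ g : Fin ((b : ℕ) - a) → Fin i,
        if StrictMono g then
          (∏ m : Fin ((b : ℕ) - a),
            algebraMap (Polynomial (Polynomial F)) (Kf F)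
                (twist F q (g m : ℕ) (Q ((a : ℕ) + 1 + m))) /
              LL F q (g m : ℕ) ^ s ((a : ℕ) + 1 + m)) /
            LL F q i ^ dsum s r ((b : ℕ) + 1)
        else 0
    else 0

lemma snoc_sum {R : Type*} [CommRing R] (f : ℕ → ℕ → R) (n i : ℕ) :
    (∑ g : Fin (n+1) → Fin (i+1), if StrictMono g then ∏ m : Fin (n+1), f (g m) (m : ℕ) else 0)
      = (∑ g : Fin (n+1) → Fin i, if StrictMono g then ∏ m : Fin (n+1), f (g m) (m : ℕ) else 0)
        + (∑ g : Fin n → Fin i, if StrictMono g then ∏ m : Fin n, f (g m) (m : ℕ) else 0) * f i n := by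
  classical
  rw [Finset.sum_mul]
  simp only [ite_mul, zero_mul]
  rw [← Finset.sum_filter, ← Finset.sum_filter, ← Finset.sum_filter]
  rw [← Finset.sum_filter_add_sum_filter_not
    (Finset.univ.filter (fun g : Fin (n+1) → Fin (i+1) => StrictMono g))
    (fun g => g (Fin.last n) = Fin.last i), add_comm]
  congr 1
  · -- ¬ (g last = last i): corresponds to functions into Fin i
    refine Finset.sum_bij'
      (fun g hg => fun m => (g m).castPred ?_)
      (fun h _ => fun m => (h m).castSucc) ?_ ?_ ?_ ?_ ?_
    · simp only [Finset.mem_filter, Finset.mem_univ, true_and] at hg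
      exact ne_of_lt (lt_of_le_of_lt (hg.1.monotone (Fin.le_last m))
        (lt_of_le_of_ne (Fin.le_last _) hg.2))
    · intro g hg
      simp only [Finset.mem_filter, Finset.mem_univ, true_and] at hg ⊢
      exact Fin.strictMono_castPred_comp _ hg.1
    · intro h hh
      simp only [Finset.mem_filter, Finset.mem_univ, true_and] at hh ⊢
      refine ⟨fun a b hab => Fin.strictMono_castSucc (hh hab), ?_⟩
      exact ne_of_lt (Fin.castSucc_lt_last _)
    · intro g hg; funext m; simp only [Fin.castSucc_castPred]
    · intro h hh; funext m; simp only [Fin.castPred_castSucc]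
    · intro g hg
      exact Finset.prod_congr rfl fun m _ => by simp only [Fin.coe_castPred]
  · -- g last = last i: snoc bijection
    refine Finset.sum_bij'
      (fun g hg => fun m => (g m.castSucc).castPred ?_)
      (fun h _ => Fin.snoc (fun m => (h m).castSucc) (Fin.last i)) ?_ ?_ ?_ ?_ ?_
    · simp only [Finset.mem_filter, Finset.mem_univ, true_and] at hg
      exact ne_of_lt (hg.2 ▸ hg.1 (Fin.castSucc_lt_last m))
    · intro g hg
      simp only [Finset.mem_filter, Finset.mem_univ, true_and] at hg ⊢
      exact Fin.strictMono_castPred_comp _ (hg.1.comp Fin.strictMono_castSucc)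
    · intro h hh
      simp only [Finset.mem_filter, Finset.mem_univ, true_and] at hh ⊢
      refine ⟨?_, Fin.snoc_last _ _⟩
      rw [Fin.strictMono_iff_lt_succ]
      intro m
      rw [Fin.snoc_castSucc]
      by_cases hm : m.succ = Fin.last n
      · rw [hm, Fin.snoc_last]
        exact Fin.castSucc_lt_last _
      · rw [← Fin.castSucc_castPred m.succ hm, Fin.snoc_castSucc]
        refine Fin.strictMono_castSucc (hh ?_)
        rw [← Fin.castSucc_lt_castSucc_iff, Fin.castSucc_castPred]
        exact Fin.castSucc_lt_succ (i := m)
    · intro g hg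
      simp only [Finset.mem_filter, Finset.mem_univ, true_and] at hg
      funext m
      induction m using Fin.lastCases with
      | last => simp only [Fin.snoc_last]; exact hg.2.symm
      | cast m => simp only [Fin.snoc_castSucc, Fin.castSucc_castPred]
    · intro h hh
      funext m
      simp only [Fin.snoc_castSucc, Fin.castPred_castSucc]
    · intro g hg
      simp only [Finset.mem_filter, Finset.mem_univ, true_and] at hg
      rw [Fin.prod_univ_castSucc]
      simp [hg.2, Fin.coe_castPred]

lemma sum_ite_mul {ι R : Type*} [Fintype ι] [CommRing R] (p : ι → Prop) (f : ι → R) (c : R) :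
    (∑ x : ι, if p x then f x * c else 0) = (∑ x : ι, if p x then f x else 0) * c := by
  rw [Finset.sum_mul]
  exact Finset.sum_congr rfl fun x _ => by rw [ite_mul, zero_mul]

section
variable {F : Type*} [Field F] (q r : ℕ) (s : ℕ → ℕ) (Q : ℕ → Polynomial (Polynomial F))

lemma LL_succ (i : ℕ) : LL F q (i+1) = LL F q i * (tK F - θK F ^ q ^ (i+1)) := by
  unfold LL
  exact Finset.prod_Icc_succ_top (a := 1) (b := i) (by omega) _

lemma LL_zero : LL F q 0 = 1 := by
  unfold LL
  rw [Finset.Icc_eq_empty (by omega), Finset.prod_empty]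

lemma dsum_bot {j : ℕ} (hj : j ≤ r) : dsum s r j = s j + dsum s r (j+1) := by
  unfold dsum
  rw [← Finset.Ioc_insert_left hj, Finset.sum_insert (by simp), ← Finset.Icc_add_one_left_eq_Ioc]

lemma Bmat_zero : Bmat F q r s Q 0 = 1 := by
  ext a b
  simp only [Bmat, Matrix.of_apply, Matrix.one_apply]
  by_cases h : (a : ℕ) = b
  · rw [if_pos h, if_pos (Fin.ext h), LL_zero, one_pow, inv_one]
  · have hab : ¬ a = b := fun e => h (by rw [e])
    rw [if_neg h, if_neg hab]
    by_cases h2 : (a : ℕ) < b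
    · rw [if_pos h2]
      have : IsEmpty (Fin ((b : ℕ) - a) → Fin 0) :=
        ⟨fun g => (g ⟨0, by omega⟩).elim0⟩
      rw [Finset.univ_eq_empty, Finset.sum_empty]
    · rw [if_neg h2]
end

section
variable {F : Type*} [Field F] (q r : ℕ) (s : ℕ → ℕ) (Q : ℕ → Polynomial (Polynomial F))

set_option maxHeartbeats 2000000 in
lemma Bmat_step (i : ℕ) :
    Bmat F q r s Q i * Mmat F q r s Q (i+1) = Bmat F q r s Q (i+1) := by
  classical
  ext a b
  obtain ⟨D, hD⟩ : ∃ D : Kf F, D = ((tK F - θK F ^ q ^ (i+1)) ^ dsum s r ((b:ℕ)+1))⁻¹ := ⟨_, rfl⟩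
  obtain ⟨f, hf⟩ : ∃ f : ℕ → ℕ → Kf F, f = fun k m =>
      algebraMap (Polynomial (Polynomial F)) (Kf F) (twist F q k (Q ((a:ℕ) + 1 + m))) /
        LL F q k ^ s ((a:ℕ) + 1 + m) := ⟨_, rfl⟩
  obtain ⟨SS, hSS⟩ : ∃ SS : ℕ → ℕ → Kf F, SS = fun k j =>
      ∑ g : Fin k → Fin j, if StrictMono g then ∏ m : Fin k, f (g m : ℕ) (m : ℕ) else 0 :=
    ⟨_, rfl⟩
  have SS0 : ∀ j, SS 0 j = 1 := by
    intro j
    have h1 : ∀ g : Fin 0 → Fin j, StrictMono g := fun g u => u.elim0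
    simp [hSS, h1]
  have hBle : ∀ (j : ℕ) (c : Fin r), (a:ℕ) ≤ c →
      Bmat F q r s Q j a c = SS ((c:ℕ) - a) j * (LL F q j ^ dsum s r ((c:ℕ)+1))⁻¹ := by
    intro j c hc
    rcases eq_or_lt_of_le hc with h | h
    · have h0 : (c:ℕ) - a = 0 := by omega
      rw [h0, SS0, one_mul]
      simp only [Bmat, Matrix.of_apply]
      rw [if_pos h, h]
    · simp only [Bmat, Matrix.of_apply]
      rw [if_neg (by omega), if_pos h]
      simp only [hSS, hf, div_eq_mul_inv]
      rw [Finset.sum_mul]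
      exact Finset.sum_congr rfl fun g _ => by rw [ite_mul, zero_mul]
  have key : (Bmat F q r s Q i * Mmat F q r s Q (i+1)) a b
      = Bmat F q r s Q i a b * D
        + (if 0 < (b:ℕ) then
            Bmat F q r s Q i a ⟨(b:ℕ)-1, lt_of_le_of_lt (Nat.sub_le _ 1) b.isLt⟩ *
              (algebraMap (Polynomial (Polynomial F)) (Kf F) (twist F q i (Q (b:ℕ))) * D)
          else 0) := by
    rw [Matrix.mul_apply]
    have hM : ∀ c : Fin r, Mmat F q r s Q (i+1) c b =
        (if c = b then D else 0)
        + (if (b:ℕ) = (c:ℕ)+1 then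
            algebraMap (Polynomial (Polynomial F)) (Kf F) (twist F q i (Q ((c:ℕ)+1))) * D
          else 0) := by
      intro c
      simp only [Mmat, Matrix.of_apply, Nat.add_sub_cancel]
      by_cases h1 : (c:ℕ) = (b:ℕ)
      · rw [if_pos h1, if_pos (Fin.ext h1), if_neg (by omega : ¬ (b:ℕ) = (c:ℕ)+1), add_zero,
          hD, h1]
      · have h1' : ¬ c = b := fun e => h1 (by rw [e])
        rw [if_neg h1, if_neg h1', zero_add]
        by_cases h2 : (b:ℕ) = (c:ℕ)+1
        · rw [if_pos h2, if_pos h2, hD]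
        · rw [if_neg h2, if_neg h2]
    simp only [hM, mul_add]
    rw [Finset.sum_add_distrib]
    congr 1
    · simp only [mul_ite, mul_zero]
      rw [Finset.sum_ite_eq' Finset.univ b]
      exact if_pos (Finset.mem_univ b)
    · by_cases hb : 0 < (b:ℕ)
      · rw [if_pos hb]
        set b' : Fin r := ⟨(b:ℕ)-1, lt_of_le_of_lt (Nat.sub_le _ 1) b.isLt⟩ with hb'
        have hcond : ∀ c : Fin r, ((b:ℕ) = (c:ℕ)+1) ↔ c = b' := by
          intro c
          constructor
          · intro h
            refine Fin.ext ?_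
            show (c:ℕ) = (b:ℕ) - 1
            omega
          · intro h
            subst h
            show (b:ℕ) = (b:ℕ) - 1 + 1
            omega
        simp only [hcond, mul_ite, mul_zero]
        rw [Finset.sum_ite_eq' Finset.univ b']
        have hb1 : ((b' : ℕ)) + 1 = (b:ℕ) := by
          show (b:ℕ) - 1 + 1 = (b:ℕ)
          omega
        simp [hb1]
      · rw [if_neg hb]
        have hno : ∀ c : Fin r, ¬ ((b:ℕ) = (c:ℕ)+1) := fun c => by omega
        simp [hno]
  rw [key]
  rcases lt_trichotomy ((a:ℕ)) ((b:ℕ)) with hab | hab | hab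
  · -- a < b
    have hb : 0 < (b:ℕ) := by omega
    rw [if_pos hb]
    have hble : (a:ℕ) ≤ ((⟨(b:ℕ)-1, lt_of_le_of_lt (Nat.sub_le _ 1) b.isLt⟩ : Fin r) : ℕ) := by
      show (a:ℕ) ≤ (b:ℕ) - 1
      omega
    rw [hBle i b (le_of_lt hab), hBle i _ hble,
      hBle (i+1) b (le_of_lt hab)]
    set n := (b:ℕ) - (a:ℕ) - 1 with hn
    have h1 : (b:ℕ) - (a:ℕ) = n + 1 := by omega
    have h2 : ((⟨(b:ℕ)-1, lt_of_le_of_lt (Nat.sub_le _ 1) b.isLt⟩ : Fin r) : ℕ) - (a:ℕ) = n := by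
      show (b:ℕ) - 1 - (a:ℕ) = n
      omega
    have h3 : ((⟨(b:ℕ)-1, lt_of_le_of_lt (Nat.sub_le _ 1) b.isLt⟩ : Fin r) : ℕ) + 1 = (b:ℕ) := by
      show (b:ℕ) - 1 + 1 = (b:ℕ)
      omega
    rw [h1, h2, h3]
    have hrec : SS (n+1) (i+1) = SS (n+1) i + SS n i * f i n := by
      simp only [hSS]
      exact snoc_sum f n i
    rw [hrec]
    have h4 : (a:ℕ) + 1 + n = (b:ℕ) := by omega
    have hfi : f i n = algebraMap (Polynomial (Polynomial F)) (Kf F) (twist F q i (Q (b:ℕ))) /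
        LL F q i ^ s (b:ℕ) := by
      simp only [hf, h4]
    rw [hfi, LL_succ, dsum_bot r s (show (b:ℕ) ≤ r by omega), pow_add, mul_pow, mul_inv,
      mul_inv, hD]
    ring
  · -- a = b
    have hB : Bmat F q r s Q i a b = (LL F q i ^ dsum s r ((b:ℕ)+1))⁻¹ := by
      simp only [Bmat, Matrix.of_apply]
      rw [if_pos hab, hab]
    have hB' : Bmat F q r s Q (i+1) a b = (LL F q (i+1) ^ dsum s r ((b:ℕ)+1))⁻¹ := by
      simp only [Bmat, Matrix.of_apply]
      rw [if_pos hab, hab]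
    have hzero : (if 0 < (b:ℕ) then
        Bmat F q r s Q i a ⟨(b:ℕ)-1, lt_of_le_of_lt (Nat.sub_le _ 1) b.isLt⟩ *
          (algebraMap (Polynomial (Polynomial F)) (Kf F) (twist F q i (Q (b:ℕ))) * D)
      else 0) = 0 := by
      by_cases hb : 0 < (b:ℕ)
      · rw [if_pos hb]
        have : Bmat F q r s Q i a ⟨(b:ℕ)-1, lt_of_le_of_lt (Nat.sub_le _ 1) b.isLt⟩ = 0 := by
          simp only [Bmat, Matrix.of_apply]
          rw [if_neg (show ¬ (a:ℕ) = (b:ℕ)-1 by omega), if_neg (show ¬ (a:ℕ) < (b:ℕ)-1 by omega)]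
        rw [this, zero_mul]
      · rw [if_neg hb]
    rw [hB, hB', hzero, add_zero, LL_succ, mul_pow, mul_inv, hD]
  · -- a > b
    have hB : Bmat F q r s Q i a b = 0 := by
      simp only [Bmat, Matrix.of_apply]
      rw [if_neg (by omega), if_neg (by omega)]
    have hB' : Bmat F q r s Q (i+1) a b = 0 := by
      simp only [Bmat, Matrix.of_apply]
      rw [if_neg (by omega), if_neg (by omega)]
    have hzero : (if 0 < (b:ℕ) then
        Bmat F q r s Q i a ⟨(b:ℕ)-1, lt_of_le_of_lt (Nat.sub_le _ 1) b.isLt⟩ *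
          (algebraMap (Polynomial (Polynomial F)) (Kf F) (twist F q i (Q (b:ℕ))) * D)
      else 0) = 0 := by
      by_cases hb : 0 < (b:ℕ)
      · rw [if_pos hb]
        have : Bmat F q r s Q i a ⟨(b:ℕ)-1, lt_of_le_of_lt (Nat.sub_le _ 1) b.isLt⟩ = 0 := by
          simp only [Bmat, Matrix.of_apply]
          rw [if_neg (show ¬ (a:ℕ) = (b:ℕ)-1 by omega), if_neg (show ¬ (a:ℕ) < (b:ℕ)-1 by omega)]
        rw [this, zero_mul]
      · rw [if_neg hb]
    rw [hB, hB', hzero, add_zero, zero_mul]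
end


/-- For every `i ≥ 1` the product `B_i = M_1·M_2⋯M_i` is upper triangular with
`B_i[ℓ,ℓ] = 1/𝕃_i^{d_ℓ}`,
`B_i[ℓ,j] = Σ_{0 ≤ i_ℓ < ⋯ < i_{j−1} < i} (Q_ℓ^{(i_ℓ)}⋯Q_{j−1}^{(i_{j−1})}) /
(𝕃_{i_ℓ}^{s_ℓ}⋯𝕃_{i_{j−1}}^{s_{j−1}} · 𝕃_i^{d_j})` for `ℓ < j`, and `B_i[ℓ,j] = 0`
for `ℓ > j`.  The inner sum is indexed by strictly monotone tuples
`g : Fin (j−ℓ) → Fin i` recording `(i_ℓ,…,i_{j−1})`. -/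
theorem stmt9 (F : Type*) [Field F] [Fintype F] (r : ℕ) (hr : 1 ≤ r)
    (s : ℕ → ℕ) (hs : ∀ m, 1 ≤ m → m ≤ r → 1 ≤ s m)
    (Q : ℕ → Polynomial (Polynomial F)) (i : ℕ) (hi : 1 ≤ i) :
    ((List.range i).map fun k => Mmat F (Fintype.card F) r s Q (k + 1)).prod =
      Matrix.of fun a b : Fin r =>
        if (a : ℕ) = b then (LL F (Fintype.card F) i ^ dsum s r ((a : ℕ) + 1))⁻¹
        else if (a : ℕ) < b then
          ∑ g : Fin ((b : ℕ) - a) → Fin i,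
            if StrictMono g then
              (∏ m : Fin ((b : ℕ) - a),
                algebraMap (Polynomial (Polynomial F)) (Kf F)
                    (twist F (Fintype.card F) (g m : ℕ) (Q ((a : ℕ) + 1 + m))) /
                  LL F (Fintype.card F) (g m : ℕ) ^ s ((a : ℕ) + 1 + m)) /
                LL F (Fintype.card F) i ^ dsum s r ((b : ℕ) + 1)
            else 0
        else 0 := by
  have key : ∀ j : ℕ,
      ((List.range j).map fun k => Mmat F (Fintype.card F) r s Q (k + 1)).prod
        = Bmat F (Fintype.card F) r s Q j := by
    intro j
    induction j with
    | zero =>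
        simp only [List.range_zero, List.map_nil, List.prod_nil]
        exact (Bmat_zero _ _ _ _).symm
    | succ n ih =>
        rw [List.range_succ, List.map_append, List.prod_append]
        simp only [List.map_cons, List.map_nil, List.prod_cons, List.prod_nil, mul_one]
        rw [ih, Bmat_step]
  exact key i
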